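/- Fix c ∈ ℝ, positive mobile-station powers P_{m,k} > 0, and positive coefficients β_1,…,β_K with Σ_{k=1}^K β_k = 1. With P_{b,k} = β_k·P, the function P ↦ r_H is strictly increasing on (0, ∞). Moreover, for fixed total base-station power P > 0, r_H is strictly concave in each individual coefficient β_k > 0 (all other coefficients fixed). -/

import Mathlib

private lemma strictConcaveOn_congr' {s : Set ℝ} {f g : ℝ → ℝ}
    (h : StrictConcaveOn ℝ s g) (he : ∀ x ∈ s, f x = g x) : StrictConcaveOn ℝ s f := by
  refine ⟨h.1, fun x hx y hy hxy a b ha hb hab => ?_⟩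
  rw [smul_eq_mul, smul_eq_mul, he x hx, he y hy,
    he _ (h.1 hx hy ha.le hb.le hab)]
  exact h.2 hx hy hxy ha hb hab

private lemma strictConcaveOn_scale {s : Set ℝ} {g : ℝ → ℝ}
    (h : StrictConcaveOn ℝ s g) {c : ℝ} (hc : 0 < c) (C : ℝ) :
    StrictConcaveOn ℝ s (fun x => c * g x + C) := by
  refine ⟨h.1, fun x hx y hy hxy a b ha hb hab => ?_⟩
  have h2 := mul_lt_mul_of_pos_left (h.2 hx hy hxy ha hb hab) hc
  have h3 : a * C + b * C = C := by rw [← add_mul, hab, one_mul]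
  simp only [smul_eq_mul] at *
  nlinarith [h2, h3]

private lemma core_concave (N q : ℝ) (hN : 0 < N) (hq : 0 < q) :
    StrictConcaveOn ℝ (Set.Ioi 0) (fun b => Real.log b - Real.log (N + q * b)) := by
  apply strictConcaveOn_of_deriv2_neg (convex_Ioi 0)
  · refine continuousOn_of_forall_continuousAt fun x hx => ?_
    have hx0 : (0:ℝ) < x := hx
    have hden : 0 < N + q * x := by positivity
    have hcont : Continuous fun b : ℝ => N + q * b := by continuity
    exact (Real.continuousAt_log hx0.ne').sub (hcont.continuousAt.log hden.ne')
  · intro x hx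
    rw [interior_Ioi] at hx
    have hx0 : (0:ℝ) < x := hx
    have hden : 0 < N + q * x := by positivity
    have hder : ∀ y ∈ Set.Ioi (0:ℝ),
        HasDerivAt (fun b => Real.log b - Real.log (N + q * b))
          (y⁻¹ - q * (N + q * y)⁻¹) y := by
      intro y hy
      have hy0 : (0:ℝ) < y := hy
      have hd : 0 < N + q * y := by positivity
      have h1 := Real.hasDerivAt_log hy0.ne'
      have h2 : HasDerivAt (fun b : ℝ => N + q * b) q y := by
        simpa using ((hasDerivAt_id y).const_mul q).const_add N
      have h3 : HasDerivAt (fun b => Real.log (N + q * b)) (q / (N + q * y)) y :=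
        h2.log hd.ne'
      exact (h1.sub h3).congr_deriv (by ring)
    have heq : deriv (fun b => Real.log b - Real.log (N + q * b)) =ᶠ[nhds x]
        (fun b => b⁻¹ - q * (N + q * b)⁻¹) := by
      filter_upwards [Ioi_mem_nhds hx0] with y hy
      exact (hder y hy).deriv
    have h2' : HasDerivAt (fun b : ℝ => N + q * b) q x := by
      simpa using ((hasDerivAt_id x).const_mul q).const_add N
    have h4 : HasDerivAt (fun b : ℝ => (N + q * b)⁻¹) (-q / (N + q * x) ^ 2) x :=
      h2'.inv hden.ne'
    have h5 : HasDerivAt (fun b : ℝ => b⁻¹ - q * (N + q * b)⁻¹)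
        (-(x ^ 2)⁻¹ - q * (-q / (N + q * x) ^ 2)) x :=
      (hasDerivAt_inv hx0.ne').sub (h4.const_mul q)
    have hkey : q ^ 2 / (N + q * x) ^ 2 < 1 / x ^ 2 := by
      rw [div_lt_div_iff₀ (by positivity) (by positivity)]
      nlinarith [mul_pos hN (mul_pos hq hx0), sq_nonneg N]
    have : deriv^[2] (fun b => Real.log b - Real.log (N + q * b)) x
        = deriv (fun b : ℝ => b⁻¹ - q * (N + q * b)⁻¹) x := by
      show deriv (deriv _) x = _
      exact heq.deriv_eq
    rw [this, h5.deriv]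
    rw [one_div] at hkey
    have : q * (-q / (N + q * x) ^ 2) = -(q ^ 2 / (N + q * x) ^ 2) := by ring
    rw [this]
    linarith

private lemma key_mono (A B N g βk d : ℝ) (hA : 0 < A) (hB : 0 < B) (hN : 0 < N)
    (hg : 0 < g) (hβ : 0 < βk) (hd : 0 < d) {x y : ℝ} (hx : 0 < x) (hxy : x < y) :
    A / (N + g * (βk * x)) * (B * (βk * x) / d) <
      A / (N + g * (βk * y)) * (B * (βk * y) / d) := by
  have hy : 0 < y := hx.trans hxy
  have h1 : 0 < N + g * (βk * x) := by positivity
  have h2 : 0 < N + g * (βk * y) := by positivity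
  rw [div_mul_div_comm, div_mul_div_comm, div_lt_div_iff₀ (by positivity) (by positivity)]
  nlinarith [mul_pos (mul_pos (mul_pos (mul_pos (mul_pos hA hB) hd) hN) hβ)
    (sub_pos.mpr hxy)]

theorem stmt_15 (K : ℕ) (hK : 1 ≤ K) (c : ℝ)
    (hmb hbm : ℕ → ℝ)
    (hhmb : ∀ k ∈ Finset.Icc 1 K, 0 < hmb k)
    (hhbm : ∀ k ∈ Finset.Icc 1 K, 0 < hbm k)
    (gb gm Nb Nm : ℝ)
    (hgb : 0 < gb) (hgm : 0 < gm) (hNb : 0 < Nb) (hNm : 0 < Nm)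
    (Pm : ℕ → ℝ) (hPm : ∀ k ∈ Finset.Icc 1 K, 0 < Pm k)
    (β : ℕ → ℝ) (hβ : ∀ k ∈ Finset.Icc 1 K, 0 < β k)
    (hβsum : ∑ k ∈ Finset.Icc 1 K, β k = 1)
    (rH : (ℕ → ℝ) → ℝ)
    (hrH : ∀ Pb : ℕ → ℝ, rH Pb = ∑ k ∈ Finset.Icc 1 K,
      (Real.logb 2 (hmb k * Pm k / (Nb + gb * Pb k)) +
       Real.logb 2 (hbm k * Pb k / (Nm + gm * ((k : ℝ) - c) ^ 2 * Pm k)))) :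
    StrictMonoOn (fun P : ℝ => rH (fun k => β k * P)) (Set.Ioi 0) ∧
    ∀ P : ℝ, 0 < P → ∀ k0 ∈ Finset.Icc 1 K,
      StrictConcaveOn ℝ (Set.Ioi 0)
        (fun b : ℝ => rH (fun k => Function.update β k0 b k * P)) := by
  constructor
  · intro P1 h1 P2 h2 h12
    have h1' : (0:ℝ) < P1 := h1
    have h2' : (0:ℝ) < P2 := h2
    simp only [hrH]
    apply Finset.sum_lt_sum_of_nonempty (Finset.nonempty_Icc.mpr hK)
    intro k hk
    have hA : 0 < hmb k * Pm k := mul_pos (hhmb k hk) (hPm k hk)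
    have hB : 0 < hbm k := hhbm k hk
    have hβk : 0 < β k := hβ k hk
    have hD : 0 < Nm + gm * ((k : ℝ) - c) ^ 2 * Pm k := by
      have := hPm k hk; positivity
    have hd1 : 0 < Nb + gb * (β k * P1) := by positivity
    have hd2 : 0 < Nb + gb * (β k * P2) := by positivity
    have hx1 : 0 < hmb k * Pm k / (Nb + gb * (β k * P1)) := by positivity
    have hy1 : 0 < hbm k * (β k * P1) / (Nm + gm * ((k : ℝ) - c) ^ 2 * Pm k) := by
      positivity
    have hx2 : 0 < hmb k * Pm k / (Nb + gb * (β k * P2)) := by positivity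
    have hy2 : 0 < hbm k * (β k * P2) / (Nm + gm * ((k : ℝ) - c) ^ 2 * Pm k) := by
      positivity
    rw [← Real.logb_mul hx1.ne' hy1.ne', ← Real.logb_mul hx2.ne' hy2.ne']
    exact Real.logb_lt_logb one_lt_two (by positivity)
      (key_mono _ _ _ _ _ _ hA hB hNb hgb hβk hD h1' h12)
  · intro P hP k0 hk0
    set D : ℕ → ℝ := fun k => Nm + gm * ((k : ℝ) - c) ^ 2 * Pm k with hD
    have hDpos : ∀ k ∈ Finset.Icc 1 K, 0 < D k := by
      intro k hk; have := hPm k hk; positivity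
    set C : ℝ := ∑ k ∈ (Finset.Icc 1 K).erase k0,
      (Real.logb 2 (hmb k * Pm k / (Nb + gb * (β k * P))) +
       Real.logb 2 (hbm k * (β k * P) / D k)) with hC
    have hA0 : 0 < hmb k0 * Pm k0 := mul_pos (hhmb k0 hk0) (hPm k0 hk0)
    have hB0 : 0 < hbm k0 := hhbm k0 hk0
    have hD0 : 0 < D k0 := hDpos k0 hk0
    set K₀ : ℝ := Real.logb 2 (hmb k0 * Pm k0) + Real.logb 2 (hbm k0 * P)
      - Real.logb 2 (D k0) + C with hK₀
    have hcore : StrictConcaveOn ℝ (Set.Ioi 0)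
        (fun b => (Real.log 2)⁻¹ *
          (Real.log b - Real.log (Nb + gb * P * b)) + K₀) :=
      strictConcaveOn_scale (core_concave Nb (gb * P) hNb (by positivity))
        (inv_pos.2 (Real.log_pos one_lt_two)) K₀
    apply strictConcaveOn_congr' hcore
    intro b hb
    have hb0 : (0:ℝ) < b := hb
    have hden : 0 < Nb + gb * (b * P) := by positivity
    rw [hrH, ← Finset.add_sum_erase _ _ hk0]
    have hrest : ∑ k ∈ (Finset.Icc 1 K).erase k0,
        (Real.logb 2 (hmb k * Pm k / (Nb + gb * (Function.update β k0 b k * P))) +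
         Real.logb 2 (hbm k * (Function.update β k0 b k * P) / D k)) = C := by
      apply Finset.sum_congr rfl
      intro k hk
      rw [Function.update_of_ne (Finset.ne_of_mem_erase hk)]
    rw [hrest, Function.update_self]
    have e1 : Real.logb 2 (hmb k0 * Pm k0 / (Nb + gb * (b * P)))
        = Real.logb 2 (hmb k0 * Pm k0) - Real.logb 2 (Nb + gb * P * b) := by
      rw [Real.logb_div hA0.ne' hden.ne']
      congr 2
      ring
    have e2 : Real.logb 2 (hbm k0 * (b * P) / D k0)
        = Real.logb 2 (hbm k0 * P) + Real.logb 2 b - Real.logb 2 (D k0) := by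
      rw [show hbm k0 * (b * P) = hbm k0 * P * b by ring,
        Real.logb_div (by positivity) hD0.ne',
        Real.logb_mul (by positivity) hb0.ne']
    rw [e1, e2]
    simp only [Real.logb, hK₀]
    ring
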